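/- In the controlled discrete route-switching process, let ŵ_i(x,s) = sup over all (position, route, accumulated-cost)-feedback policies of P(J_i^a(x) ≤ s). Then ŵ satisfies the dynamic programming equation ŵ_i(x,s) = max_{a ∈ A} Σ_{j=1}^M p_{ij} ŵ_j(F_i(x,a), s − K_i(x,a)) for x ∉ Q, with ŵ_i(x,s) = 1_{s ≥ q_i(x)} for x ∈ Q and ŵ_i(x,s) = 0 for x ∉ Q, s ≤ 0, where A is a finite action set, F_i(·,a) the controlled route, and K_i(·,a) > 0 the controlled step cost. -/
import Mathlib


open Classical in
/-- Probability that the controlled route-switching process, run under the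
feedback policy `pol : (position, mode, accumulated cost) → action`, starting
in mode `i` at node `x` with cost `c` accumulated so far, terminates in `Q`
within `n` steps with total cumulative cost at most the threshold `s`. -/
noncomputable def reachCtrl {X A : Type*} {M : ℕ} (Q : Set X)
    (F : Fin M → X → A → X) (K : Fin M → X → A → ℝ) (q : Fin M → X → ℝ)
    (p : Fin M → Fin M → ℝ) (pol : X → Fin M → ℝ → A) (s : ℝ) :
    ℕ → Fin M → X → ℝ → ℝ
  | 0, i, x, c => if x ∈ Q ∧ c + q i x ≤ s then 1 else 0
  | n + 1, i, x, c =>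
      if x ∈ Q then (if c + q i x ≤ s then 1 else 0)
      else ∑ j, p i j *
        reachCtrl Q F K q p pol s n j (F i x (pol x i c))
          (c + K i x (pol x i c))

/-- `P(J_i^a(x) ≤ s)`: the probability that the cumulative cost under policy
`pol` does not exceed `s`, as a monotone limit over horizons. -/
noncomputable def polCDF {X A : Type*} {M : ℕ} (Q : Set X)
    (F : Fin M → X → A → X) (K : Fin M → X → A → ℝ) (q : Fin M → X → ℝ)
    (p : Fin M → Fin M → ℝ) (pol : X → Fin M → ℝ → A)
    (i : Fin M) (x : X) (s : ℝ) : ℝ :=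
  ⨆ n : ℕ, reachCtrl Q F K q p pol s n i x 0

/-- The threshold-aware value function
`ŵ_i(x,s) = sup over feedback policies of P(J_i^a(x) ≤ s)`. -/
noncomputable def optCDF {X A : Type*} [Nonempty A] {M : ℕ} (Q : Set X)
    (F : Fin M → X → A → X) (K : Fin M → X → A → ℝ) (q : Fin M → X → ℝ)
    (p : Fin M → Fin M → ℝ) (i : Fin M) (x : X) (s : ℝ) : ℝ :=
  ⨆ pol : X → Fin M → ℝ → A, polCDF Q F K q p pol i x s

section Aux

variable {X A : Type*} {M : ℕ} (Q : Set X) (F : Fin M → X → A → X)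
  (K : Fin M → X → A → ℝ) (q : Fin M → X → ℝ) (p : Fin M → Fin M → ℝ)

open Classical in
/-- Finite-horizon dynamic-programming value function, with `t` the
remaining budget. -/
noncomputable def wDP : ℕ → Fin M → X → ℝ → ℝ
  | 0, i, x, t => if x ∈ Q ∧ q i x ≤ t then 1 else 0
  | n + 1, i, x, t =>
      if x ∈ Q then (if q i x ≤ t then 1 else 0)
      else ⨆ a : A, ∑ j, p i j * wDP n j (F i x a) (t - K i x a)

lemma ite_le_ite_of_iff {P P' : Prop} [Decidable P] [Decidable P'] (h : P ↔ P') :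
    (if P then (1:ℝ) else 0) ≤ if P' then 1 else 0 := by
  by_cases hp : P
  · rw [if_pos hp, if_pos (h.mp hp)]
  · rw [if_neg hp]
    split <;> norm_num

lemma bdd_of_le {ι : Sort*} {f : ι → ℝ} {C : ℝ} (h : ∀ i, f i ≤ C) :
    BddAbove (Set.range f) := ⟨C, by rintro y ⟨i, rfl⟩; exact h i⟩

variable [Nonempty A] [Fintype A]

lemma wDP_bounds (hp0 : ∀ i j, 0 ≤ p i j) (hp1 : ∀ i, ∑ j, p i j = 1) :
    ∀ n (i : Fin M) (x : X) (t : ℝ),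
      0 ≤ wDP Q F K q p n i x t ∧ wDP Q F K q p n i x t ≤ 1 := by
  intro n
  induction n with
  | zero => intro i x t; simp only [wDP]; split <;> norm_num
  | succ n ih =>
    intro i x t
    by_cases hx : x ∈ Q
    · simp only [wDP, if_pos hx]; split <;> norm_num
    · simp only [wDP, if_neg hx]
      have h0 : ∀ a : A, 0 ≤ ∑ j, p i j * wDP Q F K q p n j (F i x a) (t - K i x a) :=
        fun a => Finset.sum_nonneg fun j _ =>
          mul_nonneg (hp0 i j) (ih j (F i x a) (t - K i x a)).1
      have h1 : ∀ a : A, ∑ j, p i j * wDP Q F K q p n j (F i x a) (t - K i x a) ≤ 1 := by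
        intro a
        calc ∑ j, p i j * wDP Q F K q p n j (F i x a) (t - K i x a)
            ≤ ∑ j, p i j * 1 :=
              Finset.sum_le_sum fun j _ =>
                mul_le_mul_of_nonneg_left (ih j (F i x a) (t - K i x a)).2 (hp0 i j)
          _ = 1 := by simp [hp1 i]
      refine ⟨le_trans (h0 (Classical.arbitrary A)) (le_ciSup (bdd_of_le h1) _),
        ciSup_le h1⟩

lemma wDP_neg (hκ : (0:ℝ) < 1) (hq : ∀ i, ∀ x ∈ Q, 0 ≤ q i x)
    (hKpos : ∀ i x a, 0 < K i x a) :
    ∀ n (i : Fin M) (x : X) (t : ℝ), t < 0 → wDP Q F K q p n i x t = 0 := by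
  intro n
  induction n with
  | zero =>
    intro i x t ht
    simp only [wDP]
    rw [if_neg]
    rintro ⟨hxQ, hle⟩
    exact absurd (le_trans (hq i x hxQ) hle) (not_le.mpr ht)
  | succ n ih =>
    intro i x t ht
    by_cases hx : x ∈ Q
    · simp only [wDP, if_pos hx]
      rw [if_neg]
      exact fun hle => absurd (le_trans (hq i x hx) hle) (not_le.mpr ht)
    · simp only [wDP, if_neg hx]
      have : ∀ a : A, ∑ j, p i j * wDP Q F K q p n j (F i x a) (t - K i x a) = 0 := by
        intro a
        refine Finset.sum_eq_zero fun j _ => ?_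
        rw [ih j (F i x a) (t - K i x a) (by have := hKpos i x a; linarith), mul_zero]
      simp only [this, ciSup_const]

lemma wDP_vanish (hq : ∀ i, ∀ x ∈ Q, 0 ≤ q i x) (hKpos : ∀ i x a, 0 < K i x a) :
    ∀ n (i : Fin M) (x : X), x ∉ Q → ∀ t : ℝ, t ≤ 0 → wDP Q F K q p n i x t = 0 := by
  intro n i x hx t ht
  cases n with
  | zero => simp only [wDP]; rw [if_neg (fun h => hx h.1)]
  | succ n =>
    simp only [wDP, if_neg hx]
    have : ∀ a : A, ∑ j, p i j * wDP Q F K q p n j (F i x a) (t - K i x a) = 0 := by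
      intro a
      refine Finset.sum_eq_zero fun j _ => ?_
      rw [wDP_neg Q F K q p one_pos hq hKpos n j (F i x a) (t - K i x a)
        (by have := hKpos i x a; linarith), mul_zero]
    simp only [this, ciSup_const]

lemma wDP_mem (hxQ : ∀ (i : Fin M) (x : X), x ∈ Q → True) :
    ∀ n (i : Fin M) (x : X), x ∈ Q → ∀ t : ℝ,
      wDP Q F K q p n i x t = if q i x ≤ t then 1 else 0 := by
  intro n i x hx t
  cases n with
  | zero =>
    simp only [wDP]
    by_cases h : q i x ≤ t
    · rw [if_pos ⟨hx, h⟩, if_pos h]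
    · rw [if_neg (fun hh => h hh.2), if_neg h]
  | succ n => simp only [wDP, if_pos hx]

lemma wDP_le_succ (hp0 : ∀ i j, 0 ≤ p i j) (hp1 : ∀ i, ∑ j, p i j = 1) :
    ∀ n (i : Fin M) (x : X) (t : ℝ),
      wDP Q F K q p n i x t ≤ wDP Q F K q p (n + 1) i x t := by
  intro n
  induction n with
  | zero =>
    intro i x t
    by_cases hx : x ∈ Q
    · rw [wDP_mem Q F K q p (fun _ _ _ => trivial) 0 i x hx t,
        wDP_mem Q F K q p (fun _ _ _ => trivial) 1 i x hx t]
    · simp only [wDP]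
      rw [if_neg (fun h => hx h.1), if_neg hx]
      have h1 : ∀ a : A, ∑ j, p i j * wDP Q F K q p 0 j (F i x a) (t - K i x a) ≤ 1 := by
        intro a
        calc ∑ j, p i j * wDP Q F K q p 0 j (F i x a) (t - K i x a)
            ≤ ∑ j, p i j * 1 :=
              Finset.sum_le_sum fun j _ =>
                mul_le_mul_of_nonneg_left
                  (wDP_bounds Q F K q p hp0 hp1 0 j (F i x a) (t - K i x a)).2 (hp0 i j)
          _ = 1 := by simp [hp1 i]
      refine le_trans ?_ (le_ciSup (bdd_of_le h1) (Classical.arbitrary A))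
      exact Finset.sum_nonneg fun j _ =>
        mul_nonneg (hp0 i j) (wDP_bounds Q F K q p hp0 hp1 0 j _ _).1
  | succ n ih =>
    intro i x t
    by_cases hx : x ∈ Q
    · simp only [wDP, if_pos hx]; exact le_refl _
    · simp only [wDP, if_neg hx]
      have h1 : ∀ a : A, ∑ j, p i j * wDP Q F K q p (n + 1) j (F i x a) (t - K i x a) ≤ 1 := by
        intro a
        calc ∑ j, p i j * wDP Q F K q p (n + 1) j (F i x a) (t - K i x a)
            ≤ ∑ j, p i j * 1 :=
              Finset.sum_le_sum fun j _ =>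
                mul_le_mul_of_nonneg_left
                  (wDP_bounds Q F K q p hp0 hp1 (n + 1) j (F i x a) (t - K i x a)).2 (hp0 i j)
          _ = 1 := by simp [hp1 i]
      refine ciSup_mono (bdd_of_le h1) fun a => ?_
      exact Finset.sum_le_sum fun j _ =>
        mul_le_mul_of_nonneg_left (ih j (F i x a) (t - K i x a)) (hp0 i j)

lemma wDP_mono (hp0 : ∀ i j, 0 ≤ p i j) (hp1 : ∀ i, ∑ j, p i j = 1)
    {n m : ℕ} (hnm : n ≤ m) (i : Fin M) (x : X) (t : ℝ) :
    wDP Q F K q p n i x t ≤ wDP Q F K q p m i x t := by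
  induction m with
  | zero => simp_all
  | succ m ih =>
    rcases Nat.lt_or_ge n (m + 1) with h | h
    · exact le_trans (ih (Nat.lt_succ_iff.mp h))
        (wDP_le_succ Q F K q p hp0 hp1 m i x t)
    · have : n = m + 1 := le_antisymm hnm h
      subst this; exact le_refl _

lemma wDP_stab {κ : ℝ} (hκ : 0 < κ) (hK : ∀ i x a, κ ≤ K i x a)
    (hq : ∀ i, ∀ x ∈ Q, 0 ≤ q i x) :
    ∀ (n m : ℕ) (i : Fin M) (x : X) (t : ℝ), t < n * κ →
      wDP Q F K q p (n + m) i x t = wDP Q F K q p n i x t := by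
  have hKpos : ∀ i x a, 0 < K i x a := fun i x a => lt_of_lt_of_le hκ (hK i x a)
  intro n
  induction n with
  | zero =>
    intro m i x t ht
    simp only [Nat.zero_add]
    rw [wDP_neg Q F K q p one_pos hq hKpos m i x t (by simpa using ht),
      wDP_neg Q F K q p one_pos hq hKpos 0 i x t (by simpa using ht)]
  | succ n ih =>
    intro m i x t ht
    have hrw : n + 1 + m = (n + m) + 1 := by omega
    rw [hrw]
    by_cases hx : x ∈ Q
    · simp only [wDP, if_pos hx]
    · simp only [wDP, if_neg hx]
      refine iSup_congr fun a => Finset.sum_congr rfl fun j _ => ?_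
      rw [ih m j (F i x a) (t - K i x a) (by have := hK i x a; push_cast; push_cast at ht; nlinarith)]

/-- Stationary (infinite-horizon) DP value function. -/
noncomputable def wInf (i : Fin M) (x : X) (t : ℝ) : ℝ :=
  ⨆ n : ℕ, wDP Q F K q p n i x t

lemma wInf_eq {κ : ℝ} (hκ : 0 < κ) (hK : ∀ i x a, κ ≤ K i x a)
    (hq : ∀ i, ∀ x ∈ Q, 0 ≤ q i x)
    (hp0 : ∀ i j, 0 ≤ p i j) (hp1 : ∀ i, ∑ j, p i j = 1)
    {n : ℕ} {t : ℝ} (ht : t < n * κ) (i : Fin M) (x : X) :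
    wInf Q F K q p i x t = wDP Q F K q p n i x t := by
  refine le_antisymm (ciSup_le fun m => ?_)
    (le_ciSup (bdd_of_le fun m => (wDP_bounds Q F K q p hp0 hp1 m i x t).2) n |>.trans ?_)
  · rcases le_total m n with h | h
    · exact wDP_mono Q F K q p hp0 hp1 h i x t
    · have := wDP_stab Q F K q p hκ hK hq n (m - n) i x t ht
      rw [Nat.add_sub_cancel' h] at this
      exact le_of_eq this
  · exact le_of_eq rfl

lemma wInf_DPE {κ : ℝ} (hκ : 0 < κ) (hK : ∀ i x a, κ ≤ K i x a)
    (hq : ∀ i, ∀ x ∈ Q, 0 ≤ q i x)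
    (hp0 : ∀ i j, 0 ≤ p i j) (hp1 : ∀ i, ∑ j, p i j = 1)
    (i : Fin M) (x : X) (hx : x ∉ Q) (t : ℝ) :
    wInf Q F K q p i x t
      = ⨆ a : A, ∑ j, p i j * wInf Q F K q p j (F i x a) (t - K i x a) := by
  obtain ⟨n, hn⟩ := exists_nat_gt (t / κ)
  have ht : t < n * κ := by rw [div_lt_iff₀ hκ] at hn; exact hn
  have ht1 : t < (n + 1 : ℕ) * κ := lt_of_lt_of_le ht (by push_cast; nlinarith)
  rw [wInf_eq Q F K q p hκ hK hq hp0 hp1 ht1 i x]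
  simp only [wDP, if_neg hx]
  refine iSup_congr fun a => Finset.sum_congr rfl fun j _ => ?_
  rw [wInf_eq Q F K q p hκ hK hq hp0 hp1
    (show t - K i x a < n * κ by have := hK i x a; linarith) j (F i x a)]

lemma wInf_mem (i : Fin M) (x : X) (hx : x ∈ Q) (t : ℝ) :
    wInf Q F K q p i x t = if q i x ≤ t then 1 else 0 := by
  unfold wInf
  have : ∀ n : ℕ, wDP Q F K q p n i x t = if q i x ≤ t then 1 else 0 :=
    fun n => wDP_mem Q F K q p (fun _ _ _ => trivial) n i x hx t
  simp only [this, ciSup_const]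

lemma wInf_vanish (hq : ∀ i, ∀ x ∈ Q, 0 ≤ q i x) (hKpos : ∀ i x a, 0 < K i x a)
    (i : Fin M) (x : X) (hx : x ∉ Q) (t : ℝ) (ht : t ≤ 0) :
    wInf Q F K q p i x t = 0 := by
  unfold wInf
  have : ∀ n : ℕ, wDP Q F K q p n i x t = 0 :=
    fun n => wDP_vanish Q F K q p hq hKpos n i x hx t ht
  simp only [this, ciSup_const]

lemma reach_le_wDP (s : ℝ) (pol : X → Fin M → ℝ → A)
    (hp0 : ∀ i j, 0 ≤ p i j) (hp1 : ∀ i, ∑ j, p i j = 1) :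
    ∀ n (i : Fin M) (x : X) (c : ℝ),
      reachCtrl Q F K q p pol s n i x c ≤ wDP Q F K q p n i x (s - c) := by
  intro n
  induction n with
  | zero =>
    intro i x c
    simp only [reachCtrl, wDP]
    have hiff : (x ∈ Q ∧ c + q i x ≤ s) ↔ (x ∈ Q ∧ q i x ≤ s - c) := by
      constructor <;> rintro ⟨h1, h2⟩ <;> exact ⟨h1, by linarith⟩
    by_cases hP : x ∈ Q ∧ c + q i x ≤ s
    · simp [hP, hiff.mp hP]
    · simp only [if_neg hP]
      split <;> norm_num
  | succ n ih =>
    intro i x c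
    by_cases hx : x ∈ Q
    · simp only [reachCtrl, wDP, if_pos hx]
      have hiff : (c + q i x ≤ s) ↔ (q i x ≤ s - c) := by constructor <;> intro <;> linarith
      by_cases hP : c + q i x ≤ s
      · simp [hP, hiff.mp hP]
      · simp only [if_neg hP]
        split <;> norm_num
    · simp only [reachCtrl, wDP, if_neg hx]
      set a₀ := pol x i c
      have h1 : ∀ a : A, ∑ j, p i j * wDP Q F K q p n j (F i x a) (s - c - K i x a) ≤ 1 := by
        intro a
        calc ∑ j, p i j * wDP Q F K q p n j (F i x a) (s - c - K i x a)
            ≤ ∑ j, p i j * 1 :=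
              Finset.sum_le_sum fun j _ =>
                mul_le_mul_of_nonneg_left
                  (wDP_bounds Q F K q p hp0 hp1 n j (F i x a) (s - c - K i x a)).2 (hp0 i j)
          _ = 1 := by simp [hp1 i]
      refine le_trans ?_ (le_ciSup (bdd_of_le h1) a₀)
      refine Finset.sum_le_sum fun j _ => mul_le_mul_of_nonneg_left ?_ (hp0 i j)
      have := ih j (F i x a₀) (c + K i x a₀)
      have hrw : s - (c + K i x a₀) = s - c - K i x a₀ := by ring
      rwa [hrw] at this

open Classical in
/-- A stationary optimal feedback policy, chosen by maximizing the
one-step DP operator applied to `wInf`. -/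
noncomputable def polStar (s : ℝ) : X → Fin M → ℝ → A :=
  fun x i c =>
    (Finite.exists_max
      (fun a : A => ∑ j, p i j * wInf Q F K q p j (F i x a) (s - c - K i x a))).choose

lemma polStar_spec (s : ℝ) (x : X) (i : Fin M) (c : ℝ) (a : A) :
    ∑ j, p i j * wInf Q F K q p j (F i x a) (s - c - K i x a)
      ≤ ∑ j, p i j * wInf Q F K q p j (F i x (polStar Q F K q p s x i c))
          (s - c - K i x (polStar Q F K q p s x i c)) :=
  (Finite.exists_max
    (fun a : A => ∑ j, p i j * wInf Q F K q p j (F i x a) (s - c - K i x a))).choose_spec a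

lemma wInf_le_reach_polStar {κ : ℝ} (hκ : 0 < κ) (hK : ∀ i x a, κ ≤ K i x a)
    (hq : ∀ i, ∀ x ∈ Q, 0 ≤ q i x)
    (hp0 : ∀ i j, 0 ≤ p i j) (hp1 : ∀ i, ∑ j, p i j = 1) (s : ℝ) :
    ∀ (n : ℕ) (i : Fin M) (x : X) (c : ℝ), s - c < n * κ →
      wInf Q F K q p i x (s - c)
        ≤ reachCtrl Q F K q p (polStar Q F K q p s) s n i x c := by
  have hKpos : ∀ i x a, 0 < K i x a := fun i x a => lt_of_lt_of_le hκ (hK i x a)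
  intro n
  induction n with
  | zero =>
    intro i x c hc
    have hc' : s - c < 0 := by simpa using hc
    by_cases hx : x ∈ Q
    · rw [wInf_mem Q F K q p i x hx (s - c), if_neg (by have := hq i x hx; linarith)]
      simp only [reachCtrl]
      split <;> norm_num
    · rw [wInf_vanish Q F K q p hq hKpos i x hx (s - c) hc'.le]
      simp only [reachCtrl]
      split <;> norm_num
  | succ n ih =>
    intro i x c hc
    by_cases hx : x ∈ Q
    · rw [wInf_mem Q F K q p i x hx (s - c)]
      simp only [reachCtrl, if_pos hx]
      have hiff : (q i x ≤ s - c) ↔ (c + q i x ≤ s) := by constructor <;> intro <;> linarith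
      by_cases hP : q i x ≤ s - c
      · simp [hP, hiff.mp hP]
      · simp only [if_neg hP]
        split <;> norm_num
    · rw [wInf_DPE Q F K q p hκ hK hq hp0 hp1 i x hx (s - c)]
      simp only [reachCtrl, if_neg hx]
      set a₀ := polStar Q F K q p s x i c with ha₀
      have hstep : (⨆ a : A, ∑ j, p i j * wInf Q F K q p j (F i x a) (s - c - K i x a))
          ≤ ∑ j, p i j * wInf Q F K q p j (F i x a₀) (s - c - K i x a₀) := by
        refine ciSup_le fun a => ?_
        have := polStar_spec Q F K q p s x i c a
        rw [← ha₀] at this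
        exact this
      refine le_trans hstep ?_
      refine Finset.sum_le_sum fun j _ => mul_le_mul_of_nonneg_left ?_ (hp0 i j)
      have hb : s - (c + K i x a₀) < n * κ := by
        have := hK i x a₀
        push_cast at hc ⊢
        nlinarith
      have := ih j (F i x a₀) (c + K i x a₀) hb
      have hrw : s - (c + K i x a₀) = s - c - K i x a₀ := by ring
      rwa [hrw] at this

lemma optCDF_eq_wInf {κ : ℝ} (hκ : 0 < κ) (hK : ∀ i x a, κ ≤ K i x a)
    (hq : ∀ i, ∀ x ∈ Q, 0 ≤ q i x)
    (hp0 : ∀ i j, 0 ≤ p i j) (hp1 : ∀ i, ∑ j, p i j = 1)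
    (i : Fin M) (x : X) (s : ℝ) :
    optCDF Q F K q p i x s = wInf Q F K q p i x s := by
  have hR1 : ∀ (pol : X → Fin M → ℝ → A) n (i : Fin M) (x : X) (c : ℝ),
      reachCtrl Q F K q p pol s n i x c ≤ 1 := fun pol n i x c =>
    le_trans (reach_le_wDP Q F K q p s pol hp0 hp1 n i x c)
      (wDP_bounds Q F K q p hp0 hp1 n i x (s - c)).2
  refine le_antisymm ?_ ?_
  · refine ciSup_le fun pol => ciSup_le fun n => ?_
    have h1 := reach_le_wDP Q F K q p s pol hp0 hp1 n i x 0
    rw [sub_zero] at h1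
    exact le_trans h1 (le_ciSup
      (bdd_of_le fun m => (wDP_bounds Q F K q p hp0 hp1 m i x s).2) n)
  · obtain ⟨N, hN⟩ := exists_nat_gt (s / κ)
    have hs : s - 0 < N * κ := by rw [sub_zero, ← div_lt_iff₀ hκ]; exact hN
    have h2 := wInf_le_reach_polStar Q F K q p hκ hK hq hp0 hp1 s N i x 0 hs
    rw [sub_zero] at h2
    have h3 : reachCtrl Q F K q p (polStar Q F K q p s) s N i x 0
        ≤ polCDF Q F K q p (polStar Q F K q p s) i x s :=
      le_ciSup (bdd_of_le fun n => hR1 (polStar Q F K q p s) n i x 0) N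
    have h4 : polCDF Q F K q p (polStar Q F K q p s) i x s ≤ optCDF Q F K q p i x s :=
      le_ciSup (bdd_of_le fun pol => ciSup_le fun n => hR1 pol n i x 0)
        (polStar Q F K q p s)
    exact le_trans h2 (le_trans h3 h4)

end Aux

/-- **Dynamic programming equation for the threshold-aware value function of
the controlled route-switching process:** for `x ∉ Q`,
`ŵ_i(x,s) = max_{a∈A} Σ_j p_{ij} ŵ_j(F_i(x,a), s − K_i(x,a))`, with
`ŵ_i(x,s) = 1_{s ≥ q_i(x)}` on `Q` and `ŵ_i(x,s) = 0` for `x ∉ Q, s ≤ 0`. -/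
theorem optCDF_dynamic_programming {X A : Type*} [Fintype X] [Fintype A]
    [Nonempty A] {M : ℕ} (Q : Set X)
    (F : Fin M → X → A → X) (K : Fin M → X → A → ℝ) (q : Fin M → X → ℝ)
    (p : Fin M → Fin M → ℝ) (κ : ℝ) (hκ : 0 < κ)
    (hK : ∀ i x a, κ ≤ K i x a) (hq : ∀ i, ∀ x ∈ Q, 0 ≤ q i x)
    (hp0 : ∀ i j, 0 ≤ p i j) (hp1 : ∀ i, ∑ j, p i j = 1) :
    (∀ i : Fin M, ∀ x ∉ Q, ∀ s : ℝ,
        optCDF Q F K q p i x s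
          = ⨆ a : A, ∑ j, p i j * optCDF Q F K q p j (F i x a) (s - K i x a)) ∧
    (∀ i : Fin M, ∀ x ∈ Q, ∀ s : ℝ,
        (q i x ≤ s → optCDF Q F K q p i x s = 1) ∧
        (s < q i x → optCDF Q F K q p i x s = 0)) ∧
    (∀ i : Fin M, ∀ x ∉ Q, ∀ s : ℝ, s ≤ 0 → optCDF Q F K q p i x s = 0) := by
  have hKpos : ∀ i x a, 0 < K i x a := fun i x a => lt_of_lt_of_le hκ (hK i x a)
  have hmain : ∀ (i : Fin M) (x : X) (s : ℝ),
      optCDF Q F K q p i x s = wInf Q F K q p i x s :=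
    fun i x s => optCDF_eq_wInf Q F K q p hκ hK hq hp0 hp1 i x s
  refine ⟨?_, ?_, ?_⟩
  · intro i x hx s
    rw [hmain i x s, wInf_DPE Q F K q p hκ hK hq hp0 hp1 i x hx s]
    refine iSup_congr fun a => Finset.sum_congr rfl fun j _ => ?_
    rw [hmain j (F i x a) (s - K i x a)]
  · intro i x hx s
    rw [hmain i x s, wInf_mem Q F K q p i x hx s]
    constructor
    · intro h; rw [if_pos h]
    · intro h; rw [if_neg (not_le.mpr h)]
  · intro i x hx s hs
    rw [hmain i x s, wInf_vanish Q F K q p hq hKpos i x hx s hs]
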